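/- For every ε > 0 there exists a constant C > 0 such that for all real Y > 1, H₁(Y) := Σ (nmkl)^{-3/4} d(n)d(m)d(k)d(l) max(n,m,k,l)³ ≤ C Y^{5/2+ε}, where the sum is over all quadruples of positive integers (n,m,k,l) with n, m, k, l ≤ Y and √n + √m = √k + √l. -/

import Mathlib

open Real

/-- `d n` is the number of positive divisors of `n`. -/
noncomputable def d (n : ℕ) : ℝ := n.divisors.card

/-- `H₁ Y` is the sum of `d(n)d(m)d(k)d(l) max(n,m,k,l)³ / (nmkl)^{3/4}` over
quadruples of positive integers `n,m,k,l ≤ Y` with `√n + √m = √k + √l`. -/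
noncomputable def H₁ (Y : ℝ) : ℝ :=
  ∑ n ∈ Finset.Icc 1 ⌊Y⌋₊, ∑ m ∈ Finset.Icc 1 ⌊Y⌋₊,
    ∑ k ∈ Finset.Icc 1 ⌊Y⌋₊, ∑ l ∈ Finset.Icc 1 ⌊Y⌋₊,
      if Real.sqrt n + Real.sqrt m = Real.sqrt k + Real.sqrt l then
        d n * d m * d k * d l * (max (max n m) (max k l) : ℝ) ^ 3
          / ((n * m * k * l : ℕ) : ℝ) ^ ((3:ℝ)/4)
      else 0

lemma sf_eq_of_parity {t s : ℕ} (ht : Squarefree t) (hs : Squarefree s)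
    (h : ∀ p, t.factorization p % 2 = s.factorization p % 2) : t = s :=
  Nat.eq_of_factorization_eq ht.ne_zero hs.ne_zero fun p => by
    have h1 := ht.natFactorization_le_one p
    have h2 := hs.natFactorization_le_one p
    have := h p
    omega

lemma sf_eq_of_sq_mul {t s A B : ℕ} (ht : Squarefree t) (hs : Squarefree s)
    (hA : A ≠ 0) (hB : B ≠ 0) (h : A^2*t = B^2*s) : t = s := by
  apply sf_eq_of_parity ht hs
  intro p
  have h1 : (A^2*t).factorization p = 2*A.factorization p + t.factorization p := by
    rw [Nat.factorization_mul (pow_ne_zero 2 hA) ht.ne_zero, Nat.factorization_pow]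
    simp [mul_comm]
  have h2 : (B^2*s).factorization p = 2*B.factorization p + s.factorization p := by
    rw [Nat.factorization_mul (pow_ne_zero 2 hB) hs.ne_zero, Nat.factorization_pow]
    simp [mul_comm]
  rw [h] at h1
  omega

lemma sf_eq_of_mul_sq {t s a b w : ℕ} (ht : Squarefree t) (hs : Squarefree s)
    (ha : a ≠ 0) (hb : b ≠ 0) (hw : w ≠ 0) (h : (a^2*t)*(b^2*s) = w*w) : t = s := by
  apply sf_eq_of_parity ht hs
  intro p
  have h1 : ((a^2*t)*(b^2*s)).factorization p
      = 2*a.factorization p + t.factorization p + (2*b.factorization p + s.factorization p) := by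
    rw [Nat.factorization_mul (mul_ne_zero (pow_ne_zero 2 ha) ht.ne_zero) (mul_ne_zero (pow_ne_zero 2 hb) hs.ne_zero),
      Nat.factorization_mul (pow_ne_zero 2 ha) ht.ne_zero,
      Nat.factorization_mul (pow_ne_zero 2 hb) hs.ne_zero,
      Nat.factorization_pow, Nat.factorization_pow]
    simp [mul_comm]
  have h2 : (w*w).factorization p = 2*w.factorization p := by
    rw [Nat.factorization_mul hw hw]; simp [two_mul]
  rw [h, h2] at h1
  omega

lemma sqrt_quad_class {n m k l : ℕ} (hn : 0 < n) (hm : 0 < m) (hk : 0 < k) (hl : 0 < l)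
    (h : Real.sqrt n + Real.sqrt m = Real.sqrt k + Real.sqrt l) :
    (k = n ∧ l = m) ∨ (k = m ∧ l = n) ∨
      ∃ t a b c e : ℕ, 0 < t ∧ 0 < a ∧ 0 < b ∧ 0 < c ∧ 0 < e ∧
        n = a^2*t ∧ m = b^2*t ∧ k = c^2*t ∧ l = e^2*t ∧ a + b = c + e := by
  have hn0 : (0:ℝ) ≤ (n:ℝ) := Nat.cast_nonneg n
  have hm0 : (0:ℝ) ≤ (m:ℝ) := Nat.cast_nonneg m
  have hk0 : (0:ℝ) ≤ (k:ℝ) := Nat.cast_nonneg k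
  have hl0 : (0:ℝ) ≤ (l:ℝ) := Nat.cast_nonneg l
  have base : (n:ℝ) + m + 2*Real.sqrt ((n:ℝ)*m) = k + l + 2*Real.sqrt ((k:ℝ)*l) := by
    have h2 : (Real.sqrt n + Real.sqrt m)^2 = (Real.sqrt k + Real.sqrt l)^2 := by rw [h]
    rw [add_sq, add_sq, Real.sq_sqrt hn0, Real.sq_sqrt hm0, Real.sq_sqrt hk0,
      Real.sq_sqrt hl0] at h2
    rw [Real.sqrt_mul hn0, Real.sqrt_mul hk0]
    linarith
  by_cases hc : Real.sqrt ((n:ℝ)*m) = Real.sqrt ((k:ℝ)*l)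
  · -- diagonal case
    have hprod : (n:ℝ)*m = (k:ℝ)*l := by
      rw [← Real.sq_sqrt (mul_nonneg hn0 hm0), ← Real.sq_sqrt (mul_nonneg hk0 hl0), hc]
    have hsum : (n:ℝ)+m = (k:ℝ)+l := by rw [hc] at base; linarith
    have h1 : (n:ℤ) + m = k + l := by exact_mod_cast hsum
    have h2 : (n:ℤ) * m = k * l := by exact_mod_cast hprod
    have hz : ((k:ℤ) - n) * ((k:ℤ) - m) = 0 := by linear_combination h2 - (k:ℤ) * h1
    rcases mul_eq_zero.mp hz with hz | hz
    · left
      have hkn : k = n := by omega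
      exact ⟨hkn, by omega⟩
    · right; left
      have hkm : k = m := by omega
      exact ⟨hkm, by omega⟩
  · -- off-diagonal case
    set R : ℤ := (k:ℤ) + l - n - m with hR
    have hr : Real.sqrt ((n:ℝ)*m) = Real.sqrt ((k:ℝ)*l) + (R:ℝ)/2 := by
      push_cast [hR]; linarith
    have hR0 : (R:ℝ) ≠ 0 := by
      intro h0; apply hc; rw [hr, h0]; ring
    have hklsq : IsSquare (k*l) := by
      by_contra hsq
      have hirr : Irrational (Real.sqrt ((k*l : ℕ):ℝ)) := irrational_sqrt_natCast_iff.mpr hsq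
      have hsq2 : (n:ℝ)*m = (k:ℝ)*l + R*Real.sqrt ((k:ℝ)*l) + (R:ℝ)^2/4 := by
        have h2 : Real.sqrt ((n:ℝ)*m)^2 = (Real.sqrt ((k:ℝ)*l) + (R:ℝ)/2)^2 := by rw [hr]
        rw [Real.sq_sqrt (mul_nonneg hn0 hm0), add_sq,
          Real.sq_sqrt (mul_nonneg hk0 hl0)] at h2
        linarith
      apply hirr
      refine ⟨((4*(n:ℤ)*m - 4*(k:ℤ)*l - R^2 : ℤ) : ℚ)/(4*R), ?_⟩
      have hee : Real.sqrt ((k:ℝ)*l) = ((n:ℝ)*m - (k:ℝ)*l - (R:ℝ)^2/4)/R := by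
        rw [eq_div_iff hR0]; linarith
      push_cast
      rw [hee]
      rw [div_eq_div_iff (by positivity) hR0]
      ring
    have hnmsq : IsSquare (n*m) := by
      by_contra hsq
      have hirr : Irrational (Real.sqrt ((n*m : ℕ):ℝ)) := irrational_sqrt_natCast_iff.mpr hsq
      obtain ⟨w, hw⟩ := hklsq
      have h1 : (k:ℝ)*(l:ℝ) = (w:ℝ)*(w:ℝ) := by exact_mod_cast hw
      have hww : Real.sqrt ((k:ℝ)*l) = (w:ℝ) := by
        rw [h1]; exact Real.sqrt_mul_self (Nat.cast_nonneg w)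
      apply hirr
      refine ⟨(w:ℚ) + (R:ℚ)/2, ?_⟩
      push_cast
      rw [hr, hww]
    obtain ⟨t, a, ht0, ha0, hna, htsf⟩ := Nat.sq_mul_squarefree_of_pos hn
    obtain ⟨s, b, hs0, hb0, hmb, hssf⟩ := Nat.sq_mul_squarefree_of_pos hm
    obtain ⟨u, c, hu0, hc0, hkc, husf⟩ := Nat.sq_mul_squarefree_of_pos hk
    obtain ⟨v, e, hv0, he0, hle, hvsf⟩ := Nat.sq_mul_squarefree_of_pos hl
    obtain ⟨w, hw⟩ := hnmsq
    have hts : t = s := by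
      refine sf_eq_of_mul_sq (w := w) htsf hssf ha0.ne' hb0.ne' ?_ ?_
      · rintro rfl; rw [Nat.mul_eq_zero] at hw; omega
      · rw [hna, hmb, ← hw]
    obtain ⟨w', hw'⟩ := hklsq
    have huv : u = v := by
      refine sf_eq_of_mul_sq (w := w') husf hvsf hc0.ne' he0.ne' ?_ ?_
      · rintro rfl; rw [Nat.mul_eq_zero] at hw'; omega
      · rw [hkc, hle, ← hw']
    have hmb' : b^2*t = m := by rw [hts]; exact hmb
    have hle' : e^2*u = l := by rw [huv]; exact hle
    have key : ∀ (x y : ℕ), Real.sqrt ((x:ℝ)^2 * y) = x * Real.sqrt y := fun x y => by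
      rw [Real.sqrt_mul (by positivity), Real.sqrt_sq (Nat.cast_nonneg x)]
    have sqn : Real.sqrt (n:ℝ) = (a:ℝ) * Real.sqrt t := by
      rw [← hna]; push_cast; exact key a t
    have sqm : Real.sqrt (m:ℝ) = (b:ℝ) * Real.sqrt t := by
      rw [← hmb']; push_cast; exact key b t
    have sqk : Real.sqrt (k:ℝ) = (c:ℝ) * Real.sqrt u := by
      rw [← hkc]; push_cast; exact key c u
    have sql : Real.sqrt (l:ℝ) = (e:ℝ) * Real.sqrt u := by
      rw [← hle']; push_cast; exact key e u
    have hab : ((a:ℝ) + b) * Real.sqrt t = ((c:ℝ) + e) * Real.sqrt u := by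
      rw [sqn, sqm, sqk, sql] at h; linarith
    have habsq : ((a+b)^2 * t : ℕ) = ((c+e)^2 * u : ℕ) := by
      have h2 : (((a:ℝ) + b) * Real.sqrt t)^2 = (((c:ℝ) + e) * Real.sqrt u)^2 := by rw [hab]
      rw [mul_pow, mul_pow, Real.sq_sqrt (Nat.cast_nonneg t),
        Real.sq_sqrt (Nat.cast_nonneg u)] at h2
      exact_mod_cast h2
    have htu : t = u := sf_eq_of_sq_mul htsf husf (by positivity) (by positivity) habsq
    have habce : a + b = c + e := by
      rw [htu] at habsq
      have := Nat.eq_of_mul_eq_mul_right hu0 habsq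
      exact Nat.pow_left_injective (by norm_num) this
    refine Or.inr (Or.inr ⟨t, a, b, c, e, ht0, ha0, hb0, hc0, he0,
      hna.symm, hmb'.symm, ?_, ?_, habce⟩)
    · rw [← hkc, htu]
    · rw [← hle', htu]

lemma divisor_bound {δ : ℝ} (hδ : 0 < δ) :
    ∃ A : ℝ, 1 ≤ A ∧ ∀ n : ℕ, 1 ≤ n → (n.divisors.card : ℝ) ≤ A * (n:ℝ) ^ δ := by
  have hlog2 : (0:ℝ) < Real.log 2 := Real.log_pos (by norm_num)
  set C₀ : ℝ := 1 + 1/(δ * Real.log 2) with hC₀def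
  have hC₀1 : (1:ℝ) ≤ C₀ := by
    have : 0 < 1/(δ * Real.log 2) := by positivity
    rw [hC₀def]; linarith
  have hexp : ∀ e : ℕ, (e+1 : ℝ) ≤ C₀ * (2:ℝ) ^ (δ * e) := by
    intro e
    have h2 : (2:ℝ) ^ (δ * e) = Real.exp (δ * e * Real.log 2) := by
      rw [Real.rpow_def_of_pos (by norm_num)]; ring_nf
    have hx0 : 0 ≤ δ * e * Real.log 2 := by positivity
    have h3 : δ * e * Real.log 2 ≤ Real.exp (δ * e * Real.log 2) := by
      have := Real.add_one_le_exp (δ * e * Real.log 2); linarith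
    have h4 : (1:ℝ) ≤ Real.exp (δ * e * Real.log 2) := Real.one_le_exp hx0
    have h5 : (e:ℝ) ≤ Real.exp (δ * e * Real.log 2) / (δ * Real.log 2) := by
      rw [le_div_iff₀ (by positivity)]
      calc (e:ℝ) * (δ * Real.log 2) = δ * e * Real.log 2 := by ring
        _ ≤ _ := h3
    rw [h2, hC₀def]
    calc (e:ℝ) + 1 ≤ Real.exp (δ * e * Real.log 2) / (δ * Real.log 2)
          + Real.exp (δ * e * Real.log 2) := by linarith
      _ = (1 + 1/(δ * Real.log 2)) * Real.exp (δ * e * Real.log 2) := by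
          field_simp; ring
  set B : ℕ := ⌈(2:ℝ) ^ (1/δ)⌉₊ with hBdef
  refine ⟨C₀ ^ (B+1), one_le_pow₀ hC₀1, ?_⟩
  intro n hn1
  have hn0 : n ≠ 0 := by omega
  rw [Nat.card_divisors hn0]
  push_cast
  have hkey : ∀ p ∈ n.primeFactors,
      ((n.factorization p : ℝ) + 1) ≤
        (if p ≤ B then C₀ else 1) * (p:ℝ) ^ (δ * (n.factorization p)) := by
    intro p hp
    have hpp : p.Prime := Nat.prime_of_mem_primeFactors hp
    have hp2 : (2:ℝ) ≤ (p:ℝ) := by exact_mod_cast hpp.two_le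
    set e : ℕ := n.factorization p
    by_cases hpB : p ≤ B
    · rw [if_pos hpB]
      calc ((e:ℝ) + 1) ≤ C₀ * (2:ℝ) ^ (δ * e) := hexp e
        _ ≤ C₀ * (p:ℝ) ^ (δ * e) := by
            apply mul_le_mul_of_nonneg_left _ (by linarith)
            exact Real.rpow_le_rpow (by norm_num) hp2 (by positivity)
    · rw [if_neg hpB, one_mul]
      have hpB' : (2:ℝ) ^ (1/δ) ≤ (p:ℝ) := by
        calc (2:ℝ) ^ (1/δ) ≤ (B:ℕ) := Nat.le_ceil _
          _ ≤ (p:ℝ) := by exact_mod_cast Nat.le_of_not_le hpB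
      have h2p : (2:ℝ) ≤ (p:ℝ) ^ δ := by
        calc (2:ℝ) = ((2:ℝ) ^ (1/δ)) ^ δ := by
              rw [← Real.rpow_mul (by norm_num : (0:ℝ) ≤ 2)]
              rw [one_div, inv_mul_cancel₀ hδ.ne', Real.rpow_one]
          _ ≤ (p:ℝ) ^ δ := Real.rpow_le_rpow (by positivity) hpB' hδ.le
      calc ((e:ℝ) + 1) ≤ (2:ℝ)^e := by
            have := Nat.lt_two_pow_self (n := e)
            have : (e+1 : ℕ) ≤ 2^e := this
            exact_mod_cast this
        _ ≤ ((p:ℝ) ^ δ)^e := pow_le_pow_left₀ (by norm_num) h2p e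
        _ = (p:ℝ) ^ (δ * e) := by
            rw [← Real.rpow_natCast ((p:ℝ)^δ) e, ← Real.rpow_mul (by positivity)]
  calc (∏ p ∈ n.primeFactors, ((n.factorization p : ℝ) + 1))
      ≤ ∏ p ∈ n.primeFactors,
          (if p ≤ B then C₀ else 1) * (p:ℝ) ^ (δ * (n.factorization p)) := by
        apply Finset.prod_le_prod
        · intro p _; positivity
        · exact hkey
    _ = (∏ p ∈ n.primeFactors, (if p ≤ B then C₀ else 1))
        * ∏ p ∈ n.primeFactors, (p:ℝ) ^ (δ * (n.factorization p)) :=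
        Finset.prod_mul_distrib
    _ ≤ C₀ ^ (B+1) * (n:ℝ) ^ δ := by
        apply mul_le_mul
        · -- bound the product of weights
          rw [← Finset.prod_filter_mul_prod_filter_not n.primeFactors (· ≤ B)]
          have h1 : ∏ p ∈ n.primeFactors.filter (· ≤ B), (if p ≤ B then C₀ else (1:ℝ))
              = C₀ ^ (n.primeFactors.filter (· ≤ B)).card := by
            rw [Finset.prod_congr rfl (fun p hp => if_pos (Finset.mem_filter.mp hp).2),
              Finset.prod_const]
          have h2 : ∏ p ∈ n.primeFactors.filter (¬ · ≤ B), (if p ≤ B then C₀ else (1:ℝ))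
              = 1 := by
            rw [Finset.prod_congr rfl (fun p hp => if_neg (Finset.mem_filter.mp hp).2)]
            exact Finset.prod_const_one
          rw [h1, h2, mul_one]
          apply pow_le_pow_right₀ hC₀1
          have : (n.primeFactors.filter (· ≤ B)) ⊆ Finset.range (B+1) := by
            intro p hp
            rw [Finset.mem_range]
            exact Nat.lt_succ_of_le (Finset.mem_filter.mp hp).2
          calc (n.primeFactors.filter (· ≤ B)).card ≤ (Finset.range (B+1)).card :=
              Finset.card_le_card this
            _ = B+1 := Finset.card_range _
        · -- the rpow product equals n^δ
          have h1 : ∀ p ∈ n.primeFactors,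
              (p:ℝ) ^ (δ * (n.factorization p)) = (((p ^ n.factorization p : ℕ)):ℝ) ^ δ := by
            intro p hp
            push_cast
            rw [← Real.rpow_natCast (p:ℝ) (n.factorization p),
              ← Real.rpow_mul (Nat.cast_nonneg p), mul_comm δ]
          rw [Finset.prod_congr rfl h1]
          rw [Real.finset_prod_rpow _ _ (fun p _ => by positivity) δ]
          rw [← Nat.cast_prod]
          have : ∏ p ∈ n.primeFactors, p ^ n.factorization p = n := by
            conv_rhs => rw [← Nat.factorization_prod_pow_eq_self hn0]
            rfl
          rw [this]
        · positivity
        · positivity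

noncomputable def U (x : ℕ) : ℝ := (x:ℝ) ^ ((3:ℝ)/2)

lemma U_nonneg (x : ℕ) : 0 ≤ U x := Real.rpow_nonneg (Nat.cast_nonneg x) _

lemma U_pos {x : ℕ} (hx : 1 ≤ x) : 0 < U x :=
  Real.rpow_pos_of_pos (by exact_mod_cast hx : (0:ℝ) < (x:ℝ)) _

lemma U_sq {x : ℕ} (hx : 1 ≤ x) : U x * U x = (x:ℝ)^3 := by
  have hx0 : (0:ℝ) < (x:ℝ) := by exact_mod_cast hx
  rw [U, ← Real.rpow_add hx0]
  norm_num

lemma sq_rpow34 {x : ℝ} (hx : 0 ≤ x) : (x^2) ^ ((3:ℝ)/4) = x ^ ((3:ℝ)/2) := by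
  rw [← Real.rpow_natCast x 2, ← Real.rpow_mul hx]
  norm_num

lemma sq_rpow32 {x : ℝ} (hx : 0 ≤ x) : (x^2) ^ ((3:ℝ)/2) = x ^ 3 := by
  rw [← Real.rpow_natCast x 2, ← Real.rpow_mul hx]
  norm_num

lemma cube_add_bound {x y : ℝ} (hx : 0 ≤ x) (hy : 0 ≤ y) : (x+y)^3 ≤ 4*(x^3 + y^3) := by
  nlinarith [sq_nonneg (x - y), mul_nonneg hx hy, mul_nonneg (mul_nonneg hx hy) (add_nonneg hx hy)]

lemma inv_sum_form {a b : ℕ} (ha : 1 ≤ a) (hb : 1 ≤ b) :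
    U a * (U b)⁻¹ + U b * (U a)⁻¹ = ((a:ℝ)^3 + (b:ℝ)^3) * (U a * U b)⁻¹ := by
  have hA := U_pos ha
  have hB := U_pos hb
  field_simp
  rw [← U_sq ha, ← U_sq hb]
  ring

lemma diag_bound {n m k l : ℕ} (hn : 1 ≤ n) (hm : 1 ≤ m)
    (hkl : (k = n ∧ l = m) ∨ (k = m ∧ l = n)) :
    ((max (max n m) (max k l) : ℕ) : ℝ)^3 / ((n * m * k * l : ℕ) : ℝ) ^ ((3:ℝ)/4)
      ≤ U n * (U m)⁻¹ + U m * (U n)⁻¹ := by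
  have hn0 : (0:ℝ) < (n:ℝ) := by exact_mod_cast hn
  have hm0 : (0:ℝ) < (m:ℝ) := by exact_mod_cast hm
  have hUn := U_pos hn
  have hUm := U_pos hm
  have hdenom : ((n * m * k * l : ℕ) : ℝ) ^ ((3:ℝ)/4) = U n * U m := by
    have h1 : ((n * m * k * l : ℕ) : ℝ) = ((n:ℝ)*(m:ℝ))^2 := by
      rcases hkl with ⟨hk, hl⟩ | ⟨hk, hl⟩ <;> subst hk <;> subst hl <;> push_cast <;> ring
    rw [h1, sq_rpow34 (by positivity), Real.mul_rpow hn0.le hm0.le]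
    rfl
  have hmax : ((max (max n m) (max k l) : ℕ) : ℝ)^3 ≤ (n:ℝ)^3 + (m:ℝ)^3 := by
    have h1 : (max (max n m) (max k l) : ℕ) = max n m := by
      rcases hkl with ⟨hk, hl⟩ | ⟨hk, hl⟩ <;> subst hk <;> subst hl <;>
        simp [max_comm, max_assoc, max_left_comm]
    rw [h1]
    rcases le_total n m with h | h
    · rw [Nat.max_eq_right h]
      have : (0:ℝ) ≤ (n:ℝ)^3 := by positivity
      linarith
    · rw [Nat.max_eq_left h]
      have : (0:ℝ) ≤ (m:ℝ)^3 := by positivity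
      linarith
  rw [hdenom, inv_sum_form hn hm, div_le_iff₀ (by positivity)]
  calc ((max (max n m) (max k l) : ℕ) : ℝ)^3 ≤ (n:ℝ)^3 + (m:ℝ)^3 := hmax
    _ = ((n:ℝ)^3 + (m:ℝ)^3) * (U n * U m)⁻¹ * (U n * U m) := by
        field_simp
  
lemma off_bound {t a b c e : ℕ} (ht : 1 ≤ t) (ha : 1 ≤ a) (hb : 1 ≤ b) (hc : 1 ≤ c)
    (he : 1 ≤ e) (habce : a + b = c + e) {n m k l : ℕ}
    (hn : n = a^2*t) (hm : m = b^2*t) (hk : k = c^2*t) (hl : l = e^2*t) :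
    ((max (max n m) (max k l) : ℕ) : ℝ)^3 / ((n * m * k * l : ℕ) : ℝ) ^ ((3:ℝ)/4)
      ≤ 16 * (U a * (U b)⁻¹ + U b * (U a)⁻¹) * (U c * (U e)⁻¹ + U e * (U c)⁻¹) := by
  subst hn hm hk hl
  have ht0 : (0:ℝ) < (t:ℝ) := by exact_mod_cast ht
  have hUa := U_pos ha; have hUb := U_pos hb; have hUc := U_pos hc; have hUe := U_pos he
  have hdenom : (((a^2*t) * (b^2*t) * (c^2*t) * (e^2*t) : ℕ) : ℝ) ^ ((3:ℝ)/4)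
      = U a * U b * U c * U e * (t:ℝ)^3 := by
    push_cast
    rw [show ((a:ℝ)^2*t * ((b:ℝ)^2*t) * ((c:ℝ)^2*t) * ((e:ℝ)^2*t))
        = (((a:ℝ)*b*c*e)^2) * (((t:ℝ)^2)^2) by ring]
    rw [Real.mul_rpow (by positivity) (by positivity)]
    rw [sq_rpow34 (by positivity), sq_rpow34 (by positivity), sq_rpow32 (by positivity)]
    rw [Real.mul_rpow (by positivity) (Nat.cast_nonneg e),
      Real.mul_rpow (by positivity) (Nat.cast_nonneg c),
      Real.mul_rpow (Nat.cast_nonneg a) (Nat.cast_nonneg b)]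
    rfl
  have hmaxN : (max (max (a^2*t) (b^2*t)) (max (c^2*t) (e^2*t)) : ℕ) ≤ (a+b)^2*t := by
    have h1 : a^2*t ≤ (a+b)^2*t :=
      Nat.mul_le_mul_right t (Nat.pow_le_pow_left (Nat.le_add_right a b) 2)
    have h2 : b^2*t ≤ (a+b)^2*t :=
      Nat.mul_le_mul_right t (Nat.pow_le_pow_left (Nat.le_add_left b a) 2)
    have h3 : c^2*t ≤ (a+b)^2*t :=
      Nat.mul_le_mul_right t (Nat.pow_le_pow_left (by omega) 2)
    have h4 : e^2*t ≤ (a+b)^2*t :=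
      Nat.mul_le_mul_right t (Nat.pow_le_pow_left (by omega) 2)
    omega
  have hmax : ((max (max (a^2*t) (b^2*t)) (max (c^2*t) (e^2*t)) : ℕ) : ℝ)^3
      ≤ ((a:ℝ)+b)^6 * (t:ℝ)^3 := by
    calc ((max (max (a^2*t) (b^2*t)) (max (c^2*t) (e^2*t)) : ℕ) : ℝ)^3
        ≤ (((a+b)^2*t : ℕ):ℝ)^3 := by
          apply pow_le_pow_left₀ (Nat.cast_nonneg _)
          exact_mod_cast hmaxN
      _ = ((a:ℝ)+b)^6 * (t:ℝ)^3 := by push_cast; ring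
  have hkey : ((a:ℝ)+b)^6 ≤ 16 * ((a:ℝ)^3+(b:ℝ)^3) * ((c:ℝ)^3+(e:ℝ)^3) := by
    have hce : (a:ℝ)+b = (c:ℝ)+e := by exact_mod_cast habce
    have k1 : ((a:ℝ)+b)^3 ≤ 4*((a:ℝ)^3 + (b:ℝ)^3) :=
      cube_add_bound (Nat.cast_nonneg a) (Nat.cast_nonneg b)
    have k2 : ((c:ℝ)+e)^3 ≤ 4*((c:ℝ)^3 + (e:ℝ)^3) :=
      cube_add_bound (Nat.cast_nonneg c) (Nat.cast_nonneg e)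
    calc ((a:ℝ)+b)^6 = ((a:ℝ)+b)^3 * ((c:ℝ)+e)^3 := by rw [← hce]; ring
      _ ≤ (4*((a:ℝ)^3 + (b:ℝ)^3)) * (4*((c:ℝ)^3 + (e:ℝ)^3)) := by
          apply mul_le_mul k1 k2 (by positivity) (by positivity)
      _ = 16 * ((a:ℝ)^3+(b:ℝ)^3) * ((c:ℝ)^3+(e:ℝ)^3) := by ring
  rw [hdenom, inv_sum_form ha hb, inv_sum_form hc he, div_le_iff₀ (by positivity)]
  calc ((max (max (a^2*t) (b^2*t)) (max (c^2*t) (e^2*t)) : ℕ) : ℝ)^3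
      ≤ ((a:ℝ)+b)^6 * (t:ℝ)^3 := hmax
    _ ≤ 16 * ((a:ℝ)^3+(b:ℝ)^3) * ((c:ℝ)^3+(e:ℝ)^3) * (t:ℝ)^3 := by
        apply mul_le_mul_of_nonneg_right hkey (by positivity)
    _ = 16 * (((a:ℝ)^3 + (b:ℝ)^3) * (U a * U b)⁻¹) * (((c:ℝ)^3 + (e:ℝ)^3) * (U c * U e)⁻¹)
        * (U a * U b * U c * U e * (t:ℝ)^3) := by
        field_simp

noncomputable def Zc : ℝ := ∑' n : ℕ, ((n:ℝ) ^ ((3:ℝ)/2))⁻¹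
noncomputable def Zc' : ℝ := ∑' n : ℕ, ((n:ℝ) ^ ((5:ℝ)/2))⁻¹

lemma summable32 : Summable (fun n : ℕ => ((n:ℝ) ^ ((3:ℝ)/2))⁻¹) := by
  have := Real.summable_one_div_nat_rpow.mpr (show (1:ℝ) < 3/2 by norm_num)
  simpa [one_div] using this

lemma summable52 : Summable (fun n : ℕ => ((n:ℝ) ^ ((5:ℝ)/2))⁻¹) := by
  have := Real.summable_one_div_nat_rpow.mpr (show (1:ℝ) < 5/2 by norm_num)
  simpa [one_div] using this

lemma Zc_nonneg : 0 ≤ Zc := tsum_nonneg (fun n => by positivity)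
lemma Zc'_nonneg : 0 ≤ Zc' := tsum_nonneg (fun n => by positivity)

lemma sum_v_le (N : ℕ) : ∑ n ∈ Finset.Icc 1 N, (U n)⁻¹ ≤ Zc := by
  apply Summable.sum_le_tsum _ (fun n _ => by positivity) summable32

lemma sum_v'_le (N : ℕ) : ∑ n ∈ Finset.Icc 1 N, ((n:ℝ) ^ ((5:ℝ)/2))⁻¹ ≤ Zc' := by
  apply Summable.sum_le_tsum _ (fun n _ => by positivity) summable52

lemma sum_u_le {Y : ℝ} (hY : 1 ≤ Y) : ∑ n ∈ Finset.Icc 1 ⌊Y⌋₊, U n ≤ Y ^ ((5:ℝ)/2) := by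
  have hY0 : (0:ℝ) < Y := by linarith
  have hb : ∀ n ∈ Finset.Icc 1 ⌊Y⌋₊, U n ≤ Y ^ ((3:ℝ)/2) := by
    intro n hn
    rw [Finset.mem_Icc] at hn
    have : (n:ℝ) ≤ Y := le_trans (by exact_mod_cast hn.2) (Nat.floor_le hY0.le)
    exact Real.rpow_le_rpow (Nat.cast_nonneg n) this (by norm_num)
  calc ∑ n ∈ Finset.Icc 1 ⌊Y⌋₊, U n ≤ (Finset.Icc 1 ⌊Y⌋₊).card • (Y ^ ((3:ℝ)/2)) :=
      Finset.sum_le_card_nsmul _ _ _ hb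
    _ = (⌊Y⌋₊ : ℝ) * Y ^ ((3:ℝ)/2) := by
        rw [nsmul_eq_mul, Nat.card_Icc]; norm_num
    _ ≤ Y * Y ^ ((3:ℝ)/2) := by
        apply mul_le_mul_of_nonneg_right (Nat.floor_le hY0.le) (by positivity)
    _ = Y ^ ((5:ℝ)/2) := by
        rw [show ((5:ℝ)/2) = 1 + 3/2 by norm_num, Real.rpow_add hY0, Real.rpow_one]

lemma sum_X_le {Y : ℝ} (hY : 1 ≤ Y) {t : ℕ} (ht : 1 ≤ t) :
    ∑ a ∈ Finset.Icc 1 ⌊Y⌋₊, (if a^2*t ≤ ⌊Y⌋₊ then U a else 0) ≤ (Y/t) ^ ((5:ℝ)/4) := by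
  have hY0 : (0:ℝ) < Y := by linarith
  have ht0 : (0:ℝ) < (t:ℝ) := by exact_mod_cast ht
  have hYt : (0:ℝ) < Y/t := by positivity
  set R : ℝ := (Y/t) ^ ((1:ℝ)/2) with hR
  have hR0 : 0 ≤ R := by positivity
  have hbound : ∀ a : ℕ, a^2*t ≤ ⌊Y⌋₊ → (a:ℝ) ≤ R := by
    intro a haT
    have h1 : ((a^2*t : ℕ) : ℝ) ≤ Y := by
      calc ((a^2*t : ℕ) : ℝ) ≤ (⌊Y⌋₊ : ℝ) := by exact_mod_cast haT
        _ ≤ Y := Nat.floor_le hY0.le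
    have h2 : (a:ℝ)^2 ≤ Y/t := by
      rw [le_div_iff₀ ht0]
      calc (a:ℝ)^2 * t = ((a^2*t : ℕ) : ℝ) := by push_cast; ring
        _ ≤ Y := h1
    calc (a:ℝ) = ((a:ℝ)^2) ^ ((1:ℝ)/2) := by
          rw [← Real.rpow_natCast (a:ℝ) 2, ← Real.rpow_mul (Nat.cast_nonneg a)]
          norm_num
      _ ≤ R := Real.rpow_le_rpow (by positivity) h2 (by norm_num)
  have hU34 : ∀ a : ℕ, a^2*t ≤ ⌊Y⌋₊ → U a ≤ (Y/t) ^ ((3:ℝ)/4) := by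
    intro a haT
    calc U a ≤ R ^ ((3:ℝ)/2) :=
        Real.rpow_le_rpow (Nat.cast_nonneg a) (hbound a haT) (by norm_num)
      _ = (Y/t) ^ ((3:ℝ)/4) := by
        rw [hR, ← Real.rpow_mul hYt.le]; norm_num
  rw [← Finset.sum_filter]
  have hsub : (Finset.Icc 1 ⌊Y⌋₊).filter (fun a => a^2*t ≤ ⌊Y⌋₊) ⊆ Finset.Icc 1 ⌊R⌋₊ := by
    intro a haf
    rw [Finset.mem_filter, Finset.mem_Icc] at haf
    rw [Finset.mem_Icc]
    exact ⟨haf.1.1, Nat.le_floor (hbound a haf.2)⟩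
  calc ∑ a ∈ (Finset.Icc 1 ⌊Y⌋₊).filter (fun a => a^2*t ≤ ⌊Y⌋₊), U a
      ≤ ((Finset.Icc 1 ⌊Y⌋₊).filter (fun a => a^2*t ≤ ⌊Y⌋₊)).card • ((Y/t) ^ ((3:ℝ)/4)) := by
        apply Finset.sum_le_card_nsmul
        intro a haf
        rw [Finset.mem_filter] at haf
        exact hU34 a haf.2
    _ ≤ (⌊R⌋₊ : ℝ) * (Y/t) ^ ((3:ℝ)/4) := by
        rw [nsmul_eq_mul]
        apply mul_le_mul_of_nonneg_right _ (by positivity)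
        have := Finset.card_le_card hsub
        rw [Nat.card_Icc] at this
        exact_mod_cast le_trans this (by omega)
    _ ≤ R * (Y/t) ^ ((3:ℝ)/4) :=
        mul_le_mul_of_nonneg_right (Nat.floor_le hR0) (by positivity)
    _ = (Y/t) ^ ((5:ℝ)/4) := by
        rw [hR, ← Real.rpow_add hYt]; norm_num

/-- generic injection comparison -/
lemma sum_le_sum_via {α β : Type*} [DecidableEq β] (s : Finset α) (T : Finset β)
    (ι : α → β) (hinj : ∀ a ∈ s, ∀ a' ∈ s, ι a = ι a' → a = a')
    (hmem : ∀ a ∈ s, ι a ∈ T) (f : α → ℝ) (g : β → ℝ)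
    (hg0 : ∀ b ∈ T, 0 ≤ g b) (hfg : ∀ a ∈ s, f a ≤ g (ι a)) :
    ∑ a ∈ s, f a ≤ ∑ b ∈ T, g b := by
  calc ∑ a ∈ s, f a ≤ ∑ a ∈ s, g (ι a) := Finset.sum_le_sum hfg
    _ = ∑ b ∈ s.image ι, g b := (Finset.sum_image hinj).symm
    _ ≤ ∑ b ∈ T, g b := by
        apply Finset.sum_le_sum_of_subset_of_nonneg
        · intro b hb
          obtain ⟨a, ha, rfl⟩ := Finset.mem_image.mp hb
          exact hmem a ha
        · intro b hb _; exact hg0 b hb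

lemma sym_sum (s : Finset ℕ) (f g : ℕ → ℝ) :
    ∑ x ∈ s, ∑ y ∈ s, (f x * g y + f y * g x)
      = 2 * ((∑ x ∈ s, f x) * (∑ x ∈ s, g x)) := by
  simp only [Finset.sum_add_distrib]
  rw [← Finset.sum_mul_sum]
  have h2 : ∑ x ∈ s, ∑ y ∈ s, f y * g x = (∑ x ∈ s, f x) * (∑ x ∈ s, g x) := by
    rw [Finset.sum_comm, ← Finset.sum_mul_sum]
  rw [h2]; ring

lemma quad_eval (s : Finset ℕ) (κ : ℝ) (f g F G : ℕ → ℝ) :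
    ∑ a ∈ s, ∑ b ∈ s, ∑ c ∈ s, ∑ e ∈ s,
        κ * ((f a * g b + f b * g a) * (F c * G e + F e * G c))
      = κ * (2 * ((∑ x ∈ s, f x) * (∑ x ∈ s, g x)))
          * (2 * ((∑ x ∈ s, F x) * (∑ x ∈ s, G x))) := by
  have inner : ∀ P : ℝ, ∑ c ∈ s, ∑ e ∈ s, κ * (P * (F c * G e + F e * G c))
      = (κ * P) * ∑ c ∈ s, ∑ e ∈ s, (F c * G e + F e * G c) := by
    intro P
    simp only [← mul_assoc, ← Finset.mul_sum]
  calc ∑ a ∈ s, ∑ b ∈ s, ∑ c ∈ s, ∑ e ∈ s,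
        κ * ((f a * g b + f b * g a) * (F c * G e + F e * G c))
      = ∑ a ∈ s, ∑ b ∈ s, (κ * (f a * g b + f b * g a))
          * ∑ c ∈ s, ∑ e ∈ s, (F c * G e + F e * G c) := by
        apply Finset.sum_congr rfl; intro a _
        apply Finset.sum_congr rfl; intro b _
        exact inner (f a * g b + f b * g a)
    _ = (∑ a ∈ s, ∑ b ∈ s, (f a * g b + f b * g a))
          * (κ * ∑ c ∈ s, ∑ e ∈ s, (F c * G e + F e * G c)) := by
        simp only [← Finset.sum_mul, ← Finset.mul_sum]
        ring
    _ = κ * (2 * ((∑ x ∈ s, f x) * (∑ x ∈ s, g x)))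
          * (2 * ((∑ x ∈ s, F x) * (∑ x ∈ s, G x))) := by
        rw [sym_sum s f g, sym_sum s F G]; ring

def Rep4 (p : ℕ×ℕ×ℕ×ℕ) (q : ℕ×ℕ×ℕ×ℕ×ℕ) : Prop :=
  0 < q.1 ∧ 0 < q.2.1 ∧ 0 < q.2.2.1 ∧ 0 < q.2.2.2.1 ∧ 0 < q.2.2.2.2 ∧
  p.1 = q.2.1^2*q.1 ∧ p.2.1 = q.2.2.1^2*q.1 ∧ p.2.2.1 = q.2.2.2.1^2*q.1 ∧
  p.2.2.2 = q.2.2.2.2^2*q.1 ∧ q.2.1 + q.2.2.1 = q.2.2.2.1 + q.2.2.2.2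

open Classical in
noncomputable def repFn (p : ℕ×ℕ×ℕ×ℕ) : ℕ×ℕ×ℕ×ℕ×ℕ :=
  if h : ∃ q, Rep4 p q then h.choose else (1,1,1,1,1)

lemma repFn_spec {p : ℕ×ℕ×ℕ×ℕ} (h : ∃ q, Rep4 p q) : Rep4 p (repFn p) := by
  rw [repFn, dif_pos h]
  exact h.choose_spec

set_option maxHeartbeats 2000000 in
theorem H₁_bound :
    ∀ ε > (0:ℝ), ∃ C > (0:ℝ), ∀ Y > (1:ℝ), H₁ Y ≤ C * Y ^ ((5:ℝ)/2 + ε) := by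
  classical
  intro ε hε
  obtain ⟨A, hA1, hA⟩ := divisor_bound (show (0:ℝ) < ε/8 by linarith)
  have hA0 : (0:ℝ) ≤ A := by linarith
  have hc1 : (0:ℝ) ≤ 4*A^4*Zc := mul_nonneg (by positivity) Zc_nonneg
  have hc2 : (0:ℝ) ≤ 64*A^4*Zc^2*Zc' := mul_nonneg (mul_nonneg (by positivity) (sq_nonneg Zc)) Zc'_nonneg
  refine ⟨4*A^4*Zc + 64*A^4*Zc^2*Zc' + 1, by linarith, ?_⟩
  intro Y hY
  have hY1 : (1:ℝ) ≤ Y := hY.le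
  have hY0 : (0:ℝ) < Y := by linarith
  have hYe : (0:ℝ) < Y ^ (ε/2) := Real.rpow_pos_of_pos hY0 _
  set N := ⌊Y⌋₊ with hNdef
  set I := Finset.Icc 1 N with hIdef
  set Q := I ×ˢ I ×ˢ I ×ˢ I with hQdef
  set F : ℕ×ℕ×ℕ×ℕ → ℝ := fun p =>
    if Real.sqrt p.1 + Real.sqrt p.2.1 = Real.sqrt p.2.2.1 + Real.sqrt p.2.2.2 then
      d p.1 * d p.2.1 * d p.2.2.1 * d p.2.2.2
        * (max (max p.1 p.2.1) (max p.2.2.1 p.2.2.2) : ℝ) ^ 3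
        / ((p.1 * p.2.1 * p.2.2.1 * p.2.2.2 : ℕ) : ℝ) ^ ((3:ℝ)/4)
    else 0 with hFdef
  have hH : H₁ Y = ∑ p ∈ Q, F p := by
    rw [H₁, hQdef]
    rw [Finset.sum_product]
    apply Finset.sum_congr rfl; intro n _
    rw [Finset.sum_product]
    apply Finset.sum_congr rfl; intro m _
    rw [Finset.sum_product]
  -- basic facts
  have hd0 : ∀ x : ℕ, 0 ≤ d x := fun x => Nat.cast_nonneg _
  have hF0 : ∀ p, 0 ≤ F p := by
    intro p
    rw [hFdef]
    dsimp only
    split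
    · apply div_nonneg _ (Real.rpow_nonneg (Nat.cast_nonneg _) _)
      have h1 := hd0 p.1; have h2 := hd0 p.2.1; have h3 := hd0 p.2.2.1; have h4 := hd0 p.2.2.2
      have h5 : (0:ℝ) ≤ (max (max (p.1:ℝ) p.2.1) (max (p.2.2.1:ℝ) p.2.2.2)) ^ 3 := by positivity
      exact mul_nonneg (mul_nonneg (mul_nonneg (mul_nonneg h1 h2) h3) h4) h5
    · exact le_rfl
  -- membership facts
  have hQmem : ∀ p : ℕ×ℕ×ℕ×ℕ, p ∈ Q → (1 ≤ p.1 ∧ p.1 ≤ N) ∧ (1 ≤ p.2.1 ∧ p.2.1 ≤ N)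
      ∧ (1 ≤ p.2.2.1 ∧ p.2.2.1 ≤ N) ∧ (1 ≤ p.2.2.2 ∧ p.2.2.2 ≤ N) := by
    intro p hp
    rw [hQdef] at hp
    simp only [Finset.mem_product, hIdef, Finset.mem_Icc] at hp
    exact ⟨hp.1, hp.2.1, hp.2.2.1, hp.2.2.2⟩
  have hNY : (N:ℝ) ≤ Y := by rw [hNdef]; exact Nat.floor_le hY0.le
  have hcastY : ∀ x : ℕ, x ≤ N → (x:ℝ) ≤ Y := fun x hx =>
    le_trans (by exact_mod_cast hx) hNY
  -- divisor product bound
  have hd4 : ∀ p : ℕ×ℕ×ℕ×ℕ, p ∈ Q →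
      d p.1 * d p.2.1 * d p.2.2.1 * d p.2.2.2 ≤ A^4 * Y^(ε/2) := by
    intro p hp
    obtain ⟨⟨h1,h1'⟩,⟨h2,h2'⟩,⟨h3,h3'⟩,⟨h4,h4'⟩⟩ := hQmem p hp
    have key : ∀ x : ℕ, 1 ≤ x → x ≤ N → d x ≤ A * Y^(ε/8) := by
      intro x hx hx'
      calc d x ≤ A * (x:ℝ)^(ε/8) := hA x hx
        _ ≤ A * Y^(ε/8) := by
            apply mul_le_mul_of_nonneg_left _ hA0
            exact Real.rpow_le_rpow (Nat.cast_nonneg x) (hcastY x hx') (by linarith)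
    have hb0 : (0:ℝ) ≤ A * Y^(ε/8) := by positivity
    have k1 := key _ h1 h1'; have k2 := key _ h2 h2'
    have k3 := key _ h3 h3'; have k4 := key _ h4 h4'
    have d1 := hd0 p.1; have d2 := hd0 p.2.1; have d3 := hd0 p.2.2.1; have d4 := hd0 p.2.2.2
    calc d p.1 * d p.2.1 * d p.2.2.1 * d p.2.2.2
        ≤ (A * Y^(ε/8)) * (A * Y^(ε/8)) * (A * Y^(ε/8)) * (A * Y^(ε/8)) := by
          apply mul_le_mul (mul_le_mul (mul_le_mul k1 k2 d2 hb0) k3 d3 (by positivity))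
            k4 d4 (by positivity)
      _ = A^4 * (Y^(ε/8))^4 := by ring
      _ = A^4 * Y^(ε/2) := by
          congr 1
          rw [← Real.rpow_natCast (Y^(ε/8)) 4, ← Real.rpow_mul hY0.le]
          congr 1
          norm_num
          ring
  -- max cast helper
  have hmaxcast : ∀ p : ℕ×ℕ×ℕ×ℕ,
      (max (max (p.1:ℝ) (p.2.1:ℝ)) (max (p.2.2.1:ℝ) (p.2.2.2:ℝ)))
        = ((max (max p.1 p.2.1) (max p.2.2.1 p.2.2.2) : ℕ) : ℝ) := by
    intro p; push_cast; rfl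
  -- nonnegativity of the ratio part
  have hratio0 : ∀ p : ℕ×ℕ×ℕ×ℕ,
      0 ≤ (max (max (p.1:ℝ) (p.2.1:ℝ)) (max (p.2.2.1:ℝ) (p.2.2.2:ℝ)))^3
        / ((p.1 * p.2.1 * p.2.2.1 * p.2.2.2 : ℕ) : ℝ) ^ ((3:ℝ)/4) := by
    intro p
    apply div_nonneg _ (Real.rpow_nonneg (Nat.cast_nonneg _) _)
    positivity
  -- the diagonal part
  set D : ℕ×ℕ×ℕ×ℕ → Prop := fun p =>
    (p.2.2.1 = p.1 ∧ p.2.2.2 = p.2.1) ∨ (p.2.2.1 = p.2.1 ∧ p.2.2.2 = p.1) with hDdef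
  set κ2 := A^4 * Y^(ε/2) with hκ2
  have hκ20 : (0:ℝ) ≤ κ2 := by positivity
  set g2 : ℕ×ℕ → ℝ := fun q => κ2 * (U q.1 * (U q.2)⁻¹ + U q.2 * (U q.1)⁻¹) with hg2
  have hg20 : ∀ q : ℕ×ℕ, 0 ≤ g2 q := fun q => mul_nonneg hκ20 (add_nonneg
    (mul_nonneg (U_nonneg _) (inv_nonneg.mpr (U_nonneg _)))
    (mul_nonneg (U_nonneg _) (inv_nonneg.mpr (U_nonneg _))))
  have hSU0 : (0:ℝ) ≤ ∑ x ∈ I, U x := Finset.sum_nonneg (fun x _ => U_nonneg x)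
  have hSV0 : (0:ℝ) ≤ ∑ x ∈ I, (U x)⁻¹ :=
    Finset.sum_nonneg (fun x _ => inv_nonneg.mpr (U_nonneg x))
  have hSU : ∑ x ∈ I, U x ≤ Y^((5:ℝ)/2) := by
    have := sum_u_le hY1; rw [← hNdef] at this; exact this
  have hSV : ∑ x ∈ I, (U x)⁻¹ ≤ Zc := sum_v_le N
  have hg2sum : ∑ q ∈ I ×ˢ I, g2 q ≤ 2 * κ2 * (Y^((5:ℝ)/2) * Zc) := by
    have heval : ∑ q ∈ I ×ˢ I, g2 q
        = κ2 * (2 * ((∑ x ∈ I, U x) * (∑ x ∈ I, (U x)⁻¹))) := by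
      rw [Finset.sum_product]
      calc ∑ x ∈ I, ∑ y ∈ I, g2 (x, y)
          = κ2 * ∑ x ∈ I, ∑ y ∈ I, (U x * (U y)⁻¹ + U y * (U x)⁻¹) := by
            rw [hg2]; simp only [← Finset.mul_sum]
        _ = κ2 * (2 * ((∑ x ∈ I, U x) * (∑ x ∈ I, (U x)⁻¹))) := by rw [sym_sum]
    rw [heval]
    have h1 : (∑ x ∈ I, U x) * (∑ x ∈ I, (U x)⁻¹) ≤ Y^((5:ℝ)/2) * Zc :=
      mul_le_mul hSU hSV hSV0 (by positivity)
    nlinarith [hκ20, h1]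
  have hdiagpart : ∀ (P : ℕ×ℕ×ℕ×ℕ → Prop) (_ : DecidablePred P),
      (∀ p, P p → (p.2.2.1 = p.1 ∧ p.2.2.2 = p.2.1) ∨ (p.2.2.1 = p.2.1 ∧ p.2.2.2 = p.1)) →
      (∀ p p', P p → P p' → p.1 = p'.1 → p.2.1 = p'.2.1 → p = p') →
      ∑ p ∈ Q.filter P, F p ≤ 2 * κ2 * (Y^((5:ℝ)/2) * Zc) := by
    intro P instP hPd hPinj
    refine le_trans (sum_le_sum_via (Q.filter P) (I ×ˢ I) (fun p => (p.1, p.2.1))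
      ?_ ?_ F g2 (fun q _ => hg20 q) ?_) hg2sum
    · intro p hp p' hp' hEq
      rw [Finset.mem_filter] at hp hp'
      rw [Prod.mk.injEq] at hEq
      exact hPinj p p' hp.2 hp'.2 hEq.1 hEq.2
    · intro p hp
      rw [Finset.mem_filter] at hp
      obtain ⟨⟨ha1,ha2⟩,⟨hb1,hb2⟩,_,_⟩ := hQmem p hp.1
      simp only [Finset.mem_product, hIdef, Finset.mem_Icc]
      exact ⟨⟨ha1, ha2⟩, ⟨hb1, hb2⟩⟩
    · intro p hp
      rw [Finset.mem_filter] at hp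
      obtain ⟨hpQ, hPp⟩ := hp
      rw [hFdef]
      dsimp only
      split
      · obtain ⟨⟨h1,_⟩,⟨h2,_⟩,_,_⟩ := hQmem p hpQ
        rw [mul_div_assoc]
        have hM : (max (max (p.1:ℝ) (p.2.1:ℝ)) (max (p.2.2.1:ℝ) (p.2.2.2:ℝ)))^3
            / ((p.1 * p.2.1 * p.2.2.1 * p.2.2.2 : ℕ) : ℝ) ^ ((3:ℝ)/4)
            ≤ U p.1 * (U p.2.1)⁻¹ + U p.2.1 * (U p.1)⁻¹ := by
          rw [hmaxcast p]
          exact diag_bound h1 h2 (hPd p hPp)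
        exact mul_le_mul (hd4 p hpQ) hM (hratio0 p) hκ20
      · exact hg20 _
  have hdiag : ∑ p ∈ Q.filter D, F p ≤ 4*A^4*Zc * (Y^((5:ℝ)/2) * Y^(ε/2)) := by
    have hsub : Q.filter D ⊆
        Q.filter (fun p => p.2.2.1 = p.1 ∧ p.2.2.2 = p.2.1)
          ∪ Q.filter (fun p => p.2.2.1 = p.2.1 ∧ p.2.2.2 = p.1) := by
      intro p hp
      rw [Finset.mem_filter] at hp
      rw [Finset.mem_union, Finset.mem_filter, Finset.mem_filter]
      rw [hDdef] at hp
      tauto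
    have h1 : ∑ p ∈ Q.filter D, F p
        ≤ ∑ p ∈ (Q.filter (fun p => p.2.2.1 = p.1 ∧ p.2.2.2 = p.2.1)
          ∪ Q.filter (fun p => p.2.2.1 = p.2.1 ∧ p.2.2.2 = p.1)), F p :=
      Finset.sum_le_sum_of_subset_of_nonneg hsub (fun p _ _ => hF0 p)
    have h2 := Finset.sum_union_inter
      (s₁ := Q.filter (fun p => p.2.2.1 = p.1 ∧ p.2.2.2 = p.2.1))
      (s₂ := Q.filter (fun p => p.2.2.1 = p.2.1 ∧ p.2.2.2 = p.1)) (f := F)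
    have h3 : (0:ℝ) ≤ ∑ p ∈ (Q.filter (fun p => p.2.2.1 = p.1 ∧ p.2.2.2 = p.2.1)
        ∩ Q.filter (fun p => p.2.2.1 = p.2.1 ∧ p.2.2.2 = p.1)), F p :=
      Finset.sum_nonneg (fun p _ => hF0 p)
    have h4 : ∑ p ∈ Q.filter (fun p => p.2.2.1 = p.1 ∧ p.2.2.2 = p.2.1), F p
        ≤ 2 * κ2 * (Y^((5:ℝ)/2) * Zc) := by
      apply hdiagpart _ inferInstance (fun p hp => Or.inl hp)
      intro p p' hp hp' e1 e2
      rcases p with ⟨n,m,k,l⟩; rcases p' with ⟨n',m',k',l'⟩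
      simp only [Prod.mk.injEq] at *
      omega
    have h5 : ∑ p ∈ Q.filter (fun p => p.2.2.1 = p.2.1 ∧ p.2.2.2 = p.1), F p
        ≤ 2 * κ2 * (Y^((5:ℝ)/2) * Zc) := by
      apply hdiagpart _ inferInstance (fun p hp => Or.inr hp)
      intro p p' hp hp' e1 e2
      rcases p with ⟨n,m,k,l⟩; rcases p' with ⟨n',m',k',l'⟩
      simp only [Prod.mk.injEq] at *
      omega
    have : ∑ p ∈ Q.filter D, F p ≤ 4 * κ2 * (Y^((5:ℝ)/2) * Zc) := by linarith
    calc ∑ p ∈ Q.filter D, F p ≤ 4 * κ2 * (Y^((5:ℝ)/2) * Zc) := this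
      _ = 4*A^4*Zc * (Y^((5:ℝ)/2) * Y^(ε/2)) := by rw [hκ2]; ring
  -- the off-diagonal part
  have hpair : ∀ x y : ℕ, (0:ℝ) ≤ U x * (U y)⁻¹ + U y * (U x)⁻¹ := fun x y => add_nonneg
    (mul_nonneg (U_nonneg _) (inv_nonneg.mpr (U_nonneg _)))
    (mul_nonneg (U_nonneg _) (inv_nonneg.mpr (U_nonneg _)))
  set κ := 16 * κ2 with hκ
  have hκ0 : (0:ℝ) ≤ κ := by rw [hκ]; linarith
  set G5 : ℕ×ℕ×ℕ×ℕ×ℕ → ℝ := fun q =>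
    κ * ((U q.2.1 * (U q.2.2.1)⁻¹ + U q.2.2.1 * (U q.2.1)⁻¹)
      * (U q.2.2.2.1 * (U q.2.2.2.2)⁻¹ + U q.2.2.2.2 * (U q.2.2.2.1)⁻¹)) with hG5
  have hG50 : ∀ q, 0 ≤ G5 q := fun q =>
    mul_nonneg hκ0 (mul_nonneg (hpair _ _) (hpair _ _))
  set T := ((I ×ˢ I ×ˢ I ×ˢ I ×ˢ I).filter (fun q : ℕ×ℕ×ℕ×ℕ×ℕ =>
      q.2.1^2*q.1 ≤ N ∧ q.2.2.1^2*q.1 ≤ N ∧ q.2.2.2.1^2*q.1 ≤ N ∧ q.2.2.2.2^2*q.1 ≤ N))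
    with hT
  have hX0 : ∀ t x : ℕ, (0:ℝ) ≤ (if x^2*t ≤ N then U x else 0) := by
    intro t x; split
    · exact U_nonneg x
    · exact le_rfl
  have hTsum : ∑ q ∈ T, G5 q ≤ 4*κ*Zc^2 * (Y^((5:ℝ)/2) * Zc') := by
    rw [hT, Finset.sum_filter, Finset.sum_product]
    have inner_bound : ∀ t ∈ I, (∑ r ∈ I ×ˢ I ×ˢ I ×ˢ I,
        if r.1^2*t ≤ N ∧ r.2.1^2*t ≤ N ∧ r.2.2.1^2*t ≤ N ∧ r.2.2.2^2*t ≤ N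
          then G5 (t, r) else 0)
        ≤ 4*κ*Zc^2 * ((Y/t) ^ ((5:ℝ)/2)) := by
      intro t htI
      have ht1 : 1 ≤ t := by
        rw [hIdef, Finset.mem_Icc] at htI; exact htI.1
      have ht0 : (0:ℝ) < (t:ℝ) := by exact_mod_cast ht1
      have hYt : (0:ℝ) < Y/t := div_pos hY0 ht0
      set X : ℕ → ℝ := fun x => if x^2*t ≤ N then U x else 0 with hX
      have hSX : ∑ x ∈ I, X x ≤ (Y/t) ^ ((5:ℝ)/4) := by
        have := sum_X_le hY1 ht1
        rw [← hNdef] at this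
        exact this
      have hSX0 : (0:ℝ) ≤ ∑ x ∈ I, X x := Finset.sum_nonneg (fun x _ => hX0 t x)
      have step1 : (∑ r ∈ I ×ˢ I ×ˢ I ×ˢ I,
          if r.1^2*t ≤ N ∧ r.2.1^2*t ≤ N ∧ r.2.2.1^2*t ≤ N ∧ r.2.2.2^2*t ≤ N
            then G5 (t, r) else 0)
          = ∑ a ∈ I, ∑ b ∈ I, ∑ c ∈ I, ∑ e ∈ I,
              if a^2*t ≤ N ∧ b^2*t ≤ N ∧ c^2*t ≤ N ∧ e^2*t ≤ N
                then G5 (t, a, b, c, e) else 0 := by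
        rw [Finset.sum_product]
        apply Finset.sum_congr rfl; intro a _
        rw [Finset.sum_product]
        apply Finset.sum_congr rfl; intro b _
        rw [Finset.sum_product]
      rw [step1]
      calc ∑ a ∈ I, ∑ b ∈ I, ∑ c ∈ I, ∑ e ∈ I,
            (if a^2*t ≤ N ∧ b^2*t ≤ N ∧ c^2*t ≤ N ∧ e^2*t ≤ N
              then G5 (t, a, b, c, e) else 0)
          ≤ ∑ a ∈ I, ∑ b ∈ I, ∑ c ∈ I, ∑ e ∈ I,
              κ * ((X a * (U b)⁻¹ + X b * (U a)⁻¹) * (X c * (U e)⁻¹ + X e * (U c)⁻¹)) := by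
            apply Finset.sum_le_sum; intro a _
            apply Finset.sum_le_sum; intro b _
            apply Finset.sum_le_sum; intro c _
            apply Finset.sum_le_sum; intro e _
            by_cases hcond : a^2*t ≤ N ∧ b^2*t ≤ N ∧ c^2*t ≤ N ∧ e^2*t ≤ N
            · rw [if_pos hcond, hX, hG5]
              dsimp only
              rw [if_pos hcond.1, if_pos hcond.2.1, if_pos hcond.2.2.1, if_pos hcond.2.2.2]
            · rw [if_neg hcond]
              have h1 : (0:ℝ) ≤ X a * (U b)⁻¹ + X b * (U a)⁻¹ := add_nonneg
                (mul_nonneg (hX0 t a) (inv_nonneg.mpr (U_nonneg _)))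
                (mul_nonneg (hX0 t b) (inv_nonneg.mpr (U_nonneg _)))
              have h2 : (0:ℝ) ≤ X c * (U e)⁻¹ + X e * (U c)⁻¹ := add_nonneg
                (mul_nonneg (hX0 t c) (inv_nonneg.mpr (U_nonneg _)))
                (mul_nonneg (hX0 t e) (inv_nonneg.mpr (U_nonneg _)))
              exact mul_nonneg hκ0 (mul_nonneg h1 h2)
        _ = κ * (2 * ((∑ x ∈ I, X x) * (∑ x ∈ I, (U x)⁻¹)))
              * (2 * ((∑ x ∈ I, X x) * (∑ x ∈ I, (U x)⁻¹))) :=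
            quad_eval I κ X (fun x => (U x)⁻¹) X (fun x => (U x)⁻¹)
        _ ≤ κ * (2 * ((Y/t) ^ ((5:ℝ)/4) * Zc)) * (2 * ((Y/t) ^ ((5:ℝ)/4) * Zc)) := by
            have hP : (∑ x ∈ I, X x) * (∑ x ∈ I, (U x)⁻¹) ≤ (Y/t) ^ ((5:ℝ)/4) * Zc :=
              mul_le_mul hSX hSV hSV0 (by positivity)
            have hP0 : (0:ℝ) ≤ (∑ x ∈ I, X x) * (∑ x ∈ I, (U x)⁻¹) :=
              mul_nonneg hSX0 hSV0
            have hP'0 : (0:ℝ) ≤ (Y/t) ^ ((5:ℝ)/4) * Zc :=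
              mul_nonneg (by positivity) Zc_nonneg
            apply mul_le_mul (mul_le_mul_of_nonneg_left (by linarith) hκ0) (by linarith)
              (by linarith) (mul_nonneg hκ0 (by linarith))
        _ = 4*κ*Zc^2 * ((Y/t) ^ ((5:ℝ)/2)) := by
            rw [show (Y/t) ^ ((5:ℝ)/2) = (Y/t) ^ ((5:ℝ)/4) * (Y/t) ^ ((5:ℝ)/4) by
              rw [← Real.rpow_add hYt]; norm_num]
            ring
    calc ∑ t ∈ I, (∑ r ∈ I ×ˢ I ×ˢ I ×ˢ I,
          if r.1^2*t ≤ N ∧ r.2.1^2*t ≤ N ∧ r.2.2.1^2*t ≤ N ∧ r.2.2.2^2*t ≤ N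
            then G5 (t, r) else 0)
        ≤ ∑ t ∈ I, 4*κ*Zc^2 * ((Y/t) ^ ((5:ℝ)/2)) := Finset.sum_le_sum inner_bound
      _ = 4*κ*Zc^2 * ∑ t ∈ I, (Y/t) ^ ((5:ℝ)/2) := by rw [Finset.mul_sum]
      _ ≤ 4*κ*Zc^2 * (Y^((5:ℝ)/2) * Zc') := by
          apply mul_le_mul_of_nonneg_left _ (by nlinarith [sq_nonneg Zc])
          have heq : ∀ t ∈ I, (Y/t) ^ ((5:ℝ)/2) = Y^((5:ℝ)/2) * (((t:ℝ)) ^ ((5:ℝ)/2))⁻¹ := by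
            intro t _
            rw [Real.div_rpow hY0.le (Nat.cast_nonneg t), div_eq_mul_inv]
          rw [Finset.sum_congr rfl heq, ← Finset.mul_sum]
          apply mul_le_mul_of_nonneg_left _ (by positivity)
          exact sum_v'_le N
  have hoff : ∑ p ∈ Q.filter (fun p => ¬ D p), F p
      ≤ 64*A^4*Zc^2*Zc' * (Y^((5:ℝ)/2) * Y^(ε/2)) := by
    rw [← Finset.sum_filter_add_sum_filter_not (Q.filter (fun p => ¬ D p))
      (fun p => ∃ q, Rep4 p q) F]
    have hzero : ∑ p ∈ (Q.filter (fun p => ¬ D p)).filter (fun p => ¬ ∃ q, Rep4 p q),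
        F p = 0 := by
      apply Finset.sum_eq_zero
      intro p hp
      simp only [Finset.mem_filter] at hp
      obtain ⟨⟨hpQ, hnD⟩, hnR⟩ := hp
      rw [hFdef]
      dsimp only
      split
      case isTrue h =>
        exfalso
        obtain ⟨⟨h1,_⟩,⟨h2,_⟩,⟨h3,_⟩,⟨h4,_⟩⟩ := hQmem p hpQ
        rcases sqrt_quad_class h1 h2 h3 h4 h with hcase | hcase |
          ⟨t,a,b,c,e,ht,ha,hb,hc,he,e1,e2,e3,e4,hs⟩
        · exact hnD (Or.inl hcase)
        · exact hnD (Or.inr hcase)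
        · exact hnR ⟨(t,a,b,c,e), ht, ha, hb, hc, he, e1, e2, e3, e4, hs⟩
      case isFalse h => rfl
    have hmain : ∑ p ∈ (Q.filter (fun p => ¬ D p)).filter (fun p => ∃ q, Rep4 p q), F p
        ≤ ∑ q ∈ T, G5 q := by
      apply sum_le_sum_via _ _ repFn ?_ ?_ F G5 (fun q _ => hG50 q) ?_
      · -- injectivity
        intro p hp p' hp' hEq
        simp only [Finset.mem_filter] at hp hp'
        have hR := repFn_spec hp.2
        have hR' := repFn_spec hp'.2
        rw [hEq] at hR
        obtain ⟨_,_,_,_,_,e1,e2,e3,e4,_⟩ := hR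
        obtain ⟨_,_,_,_,_,f1,f2,f3,f4,_⟩ := hR'
        rcases p with ⟨n,m,k,l⟩; rcases p' with ⟨n',m',k',l'⟩
        simp only [Prod.mk.injEq]
        exact ⟨e1.trans f1.symm, e2.trans f2.symm, e3.trans f3.symm, e4.trans f4.symm⟩
      · -- membership
        intro p hp
        simp only [Finset.mem_filter] at hp
        obtain ⟨⟨hpQ, hnD⟩, hex⟩ := hp
        have hR := repFn_spec hex
        obtain ⟨⟨h1,h1'⟩,⟨h2,h2'⟩,⟨h3,h3'⟩,⟨h4,h4'⟩⟩ := hQmem p hpQ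
        obtain ⟨ht,ha,hb,hc,he,e1,e2,e3,e4,_⟩ := hR
        have hapos : 0 < (repFn p).2.1^2 := by positivity
        have hq1N : (repFn p).1 ≤ N := by
          calc (repFn p).1 ≤ (repFn p).2.1^2*(repFn p).1 := Nat.le_mul_of_pos_left _ hapos
            _ = p.1 := e1.symm
            _ ≤ N := h1'
        have hcomp : ∀ (x : ℕ), 0 < x → x^2*(repFn p).1 = p.1 ∨ x^2*(repFn p).1 = p.2.1
            ∨ x^2*(repFn p).1 = p.2.2.1 ∨ x^2*(repFn p).1 = p.2.2.2 → x ≤ N := by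
          intro x hx hcases
          have hxx : x ≤ x^2*(repFn p).1 := by
            calc x ≤ x^2 := Nat.le_self_pow (by norm_num) x
              _ ≤ x^2*(repFn p).1 := Nat.le_mul_of_pos_right _ ht
          rcases hcases with hc | hc | hc | hc <;> rw [hc] at hxx <;> omega
        rw [hT]
        simp only [Finset.mem_filter, Finset.mem_product, hIdef, Finset.mem_Icc]
        refine ⟨⟨⟨ht, hq1N⟩, ⟨ha, ?_⟩, ⟨hb, ?_⟩, ⟨hc, ?_⟩, ⟨he, ?_⟩⟩, ?_, ?_, ?_, ?_⟩
        · exact hcomp _ ha (Or.inl e1.symm)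
        · exact hcomp _ hb (Or.inr (Or.inl e2.symm))
        · exact hcomp _ hc (Or.inr (Or.inr (Or.inl e3.symm)))
        · exact hcomp _ he (Or.inr (Or.inr (Or.inr e4.symm)))
        · rw [← e1]; exact h1'
        · rw [← e2]; exact h2'
        · rw [← e3]; exact h3'
        · rw [← e4]; exact h4'
      · -- pointwise bound
        intro p hp
        simp only [Finset.mem_filter] at hp
        obtain ⟨⟨hpQ, hnD⟩, hex⟩ := hp
        have hR := repFn_spec hex
        obtain ⟨ht,ha,hb,hc,he,e1,e2,e3,e4,hs⟩ := hR
        rw [hFdef]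
        dsimp only
        split
        · rw [mul_div_assoc, hmaxcast p]
          have hM := off_bound ht ha hb hc he hs e1 e2 e3 e4
          have hr0 : (0:ℝ) ≤ ((max (max p.1 p.2.1) (max p.2.2.1 p.2.2.2) : ℕ) : ℝ)^3
              / ((p.1 * p.2.1 * p.2.2.1 * p.2.2.2 : ℕ) : ℝ) ^ ((3:ℝ)/4) :=
            div_nonneg (by positivity) (Real.rpow_nonneg (Nat.cast_nonneg _) _)
          calc d p.1 * d p.2.1 * d p.2.2.1 * d p.2.2.2
              * (((max (max p.1 p.2.1) (max p.2.2.1 p.2.2.2) : ℕ) : ℝ)^3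
                / ((p.1 * p.2.1 * p.2.2.1 * p.2.2.2 : ℕ) : ℝ) ^ ((3:ℝ)/4))
              ≤ κ2 * (16 * (U (repFn p).2.1 * (U (repFn p).2.2.1)⁻¹
                  + U (repFn p).2.2.1 * (U (repFn p).2.1)⁻¹)
                * (U (repFn p).2.2.2.1 * (U (repFn p).2.2.2.2)⁻¹
                  + U (repFn p).2.2.2.2 * (U (repFn p).2.2.2.1)⁻¹)) :=
                mul_le_mul (hd4 p hpQ) hM hr0 hκ20
            _ = G5 (repFn p) := by rw [hG5, hκ]; dsimp only; ring
        · exact hG50 _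
    rw [hzero, add_zero]
    calc ∑ p ∈ (Q.filter (fun p => ¬ D p)).filter (fun p => ∃ q, Rep4 p q), F p
        ≤ ∑ q ∈ T, G5 q := hmain
      _ ≤ 4*κ*Zc^2 * (Y^((5:ℝ)/2) * Zc') := hTsum
      _ = 64*A^4*Zc^2*Zc' * (Y^((5:ℝ)/2) * Y^(ε/2)) := by rw [hκ, hκ2]; ring
  -- combine
  rw [hH, ← Finset.sum_filter_add_sum_filter_not Q D F]
  have hYnn : (0:ℝ) ≤ Y ^ ((5:ℝ)/2 + ε) := Real.rpow_nonneg hY0.le _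
  calc ∑ p ∈ Q.filter D, F p + ∑ p ∈ Q.filter (fun p => ¬ D p), F p
      ≤ 4*A^4*Zc * (Y^((5:ℝ)/2) * Y^(ε/2))
        + 64*A^4*Zc^2*Zc' * (Y^((5:ℝ)/2) * Y^(ε/2)) := add_le_add hdiag hoff
    _ = (4*A^4*Zc + 64*A^4*Zc^2*Zc') * Y^((5:ℝ)/2 + ε/2) := by
        rw [Real.rpow_add hY0]; ring
    _ ≤ (4*A^4*Zc + 64*A^4*Zc^2*Zc' + 1) * Y ^ ((5:ℝ)/2 + ε) := by
        apply mul_le_mul (by linarith)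
          (Real.rpow_le_rpow_of_exponent_le hY1 (by linarith))
          (Real.rpow_nonneg hY0.le _) (by linarith)
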